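/- Let g : [-1,1] → ℝ be a nonnegative integrable function with ∫_{-1}^{1} g = 1 and ∫_{-1}^{1} x g(x) dx = 0. Set a = ∫_{-1}^{1} (1-x²) g, a_+ = ∫_{0}^{1} (1-x²) g, a_- = ∫_{-1}^{0} (1-x²) g, and assume a_+ ≥ a_- and a ≤ 0.221. Then |∫_{-1}^{1} x(1-x²) g(x) dx| ≤ a_+ - a_+², and |∫_{-1}^{1} (1/8)(11x² - 3)x·(1-x²) g(x) dx| ≤ (a_+ - a_+²) - (11/4)(a_+ - a_+²)² + a_- /(4√11). -/

import Mathlib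

open Real MeasureTheory intervalIntegral Set

set_option maxHeartbeats 1000000
noncomputable section

private lemma lin3 (g : ℝ → ℝ) {c d : ℝ} (p q s t : ℝ → ℝ) (α β γ : ℝ)
    (hg : IntervalIntegrable g volume c d)
    (hq : Continuous q) (hs : Continuous s) (ht : Continuous t)
    (hpt : ∀ x, p x = α * q x + β * s x + γ * t x) :
    (∫ x in c..d, p x * g x)
      = α * (∫ x in c..d, q x * g x) + β * (∫ x in c..d, s x * g x)
        + γ * (∫ x in c..d, t x * g x) := by
  have Hq := hg.continuousOn_mul hq.continuousOn
  have Hs := hg.continuousOn_mul hs.continuousOn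
  have Ht := hg.continuousOn_mul ht.continuousOn
  rw [← intervalIntegral.integral_const_mul, ← intervalIntegral.integral_const_mul,
    ← intervalIntegral.integral_const_mul,
    ← intervalIntegral.integral_add (Hq.const_mul α) (Hs.const_mul β),
    ← intervalIntegral.integral_add ((Hq.const_mul α).add (Hs.const_mul β)) (Ht.const_mul γ)]
  exact intervalIntegral.integral_congr fun x _ => by rw [hpt x]; ring

private lemma ptwise {r x : ℝ} (hr2 : r^2 = 11) (hr3 : 3 ≤ r) (hx0 : 0 ≤ x) (hx1 : x ≤ 1) :
    ((11:ℝ)/8) * (x*(1-x^2)^2) - x*(1-x^2) ≤ (1-x^2)/(4*r) := by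
  have hr0 : (0:ℝ) < 4*r := by linarith
  rw [le_div_iff₀ hr0]
  have key : (1-x^2) - ((11/8) * (x*(1-x^2)^2) - x*(1-x^2))*(4*r)
      = (1-x^2)*((r*x-1)^2*(r*x+2))/2 := by
    linear_combination (-(1-x^2)*x^3*r/2) * hr2
  have h1 : (0:ℝ) ≤ 1-x^2 := by nlinarith
  have h2 : (0:ℝ) ≤ (1-x^2)*((r*x-1)^2*(r*x+2)) :=
    mul_nonneg h1 (mul_nonneg (sq_nonneg _) (by nlinarith))
  linarith


private lemma cs_aux {A B C : ℝ} (key : ∀ l : ℝ, 0 ≤ A * (l * l) + B * l + C) :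
    B ^ 2 ≤ 4 * (A * C) := by
  have h := discrim_le_zero key
  rw [discrim] at h; linarith

private lemma vaux {p U V : ℝ} (h : p ^ 2 ≤ U * V) (hV : 0 ≤ V) (hU : U ≤ 1) : p ^ 2 ≤ V := by
  nlinarith

/-- estimates of the Gegenbauer coefficients `A_2` and `A_4` for a nonnegative
integrable `g` on `[-1,1]` with `∫ g = 1`, `∫ x g = 0`. -/
theorem A2_A4_estimates (g : ℝ → ℝ) (a ap am : ℝ)
    (hg0 : ∀ x ∈ Set.Icc (-1 : ℝ) 1, 0 ≤ g x)
    (hgi : IntervalIntegrable g volume (-1) 1)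
    (hmass : (∫ x in (-1 : ℝ)..1, g x) = 1)
    (hcenter : (∫ x in (-1 : ℝ)..1, x * g x) = 0)
    (ha : a = ∫ x in (-1 : ℝ)..1, (1 - x ^ 2) * g x)
    (hap : ap = ∫ x in (0 : ℝ)..1, (1 - x ^ 2) * g x)
    (ham : am = ∫ x in (-1 : ℝ)..0, (1 - x ^ 2) * g x)
    (hord : am ≤ ap) (hsmall : a ≤ 0.221) :
    |∫ x in (-1 : ℝ)..1, x * (1 - x ^ 2) * g x| ≤ ap - ap ^ 2 ∧
    |∫ x in (-1 : ℝ)..1, (1 / 8) * (11 * x ^ 2 - 3) * x * (1 - x ^ 2) * g x| ≤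
      (ap - ap ^ 2) - (11 / 4) * (ap - ap ^ 2) ^ 2 + am / (4 * Real.sqrt 11) := by
  set r := Real.sqrt 11 with hrdef
  have hr2 : r ^ 2 = 11 := Real.sq_sqrt (by norm_num)
  have hrnn : 0 ≤ r := Real.sqrt_nonneg 11
  have hr3 : 3 ≤ r := by nlinarith only [hr2, hrnn]
  have hrpos : (0:ℝ) < 4 * r := by linarith
  -- integrability of g on subintervals
  have sub1 : Set.uIcc (0:ℝ) 1 ⊆ Set.uIcc (-1:ℝ) 1 := by
    apply Set.uIcc_subset_uIcc <;> simp [Set.mem_uIcc] <;> norm_num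
  have sub2 : Set.uIcc (-1:ℝ) 0 ⊆ Set.uIcc (-1:ℝ) 1 := by
    apply Set.uIcc_subset_uIcc <;> simp [Set.mem_uIcc] <;> norm_num
  have hg1 : IntervalIntegrable g volume 0 1 := hgi.mono_set sub1
  have hg2 : IntervalIntegrable g volume (-1) 0 := hgi.mono_set sub2
  have Hi : ∀ {c d : ℝ}, IntervalIntegrable g volume c d → ∀ (p : ℝ → ℝ), Continuous p →
      IntervalIntegrable (fun x => p x * g x) volume c d :=
    fun h p hp => h.continuousOn_mul hp.continuousOn
  -- pointwise membership helpers
  have mem1 : ∀ u : ℝ, u ∈ Icc (0:ℝ) 1 → 0 ≤ g u :=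
    fun u hu => hg0 u ⟨by linarith [hu.1], hu.2⟩
  have mem2 : ∀ u : ℝ, u ∈ Icc (-1:ℝ) 0 → 0 ≤ g u :=
    fun u hu => hg0 u ⟨hu.1, by linarith [hu.2]⟩
  -- bridging ∫ 1 * g
  have one1 : (∫ x in (0:ℝ)..1, (1:ℝ) * g x) = ∫ x in (0:ℝ)..1, g x := by simp
  have one2 : (∫ x in (-1:ℝ)..0, (1:ℝ) * g x) = ∫ x in (-1:ℝ)..0, g x := by simp
  -- splits
  have F1 : (∫ x in (-1:ℝ)..0, g x) + (∫ x in (0:ℝ)..1, g x) = 1 := by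
    rw [intervalIntegral.integral_add_adjacent_intervals hg2 hg1]; exact hmass
  have F2 : (∫ x in (-1:ℝ)..0, x * g x) + (∫ x in (0:ℝ)..1, x * g x) = 0 := by
    rw [intervalIntegral.integral_add_adjacent_intervals (Hi hg2 _ (by fun_prop))
      (Hi hg1 _ (by fun_prop))]; exact hcenter
  have F3 : am + ap = a := by
    rw [ham, hap, ha, intervalIntegral.integral_add_adjacent_intervals (Hi hg2 _ (by fun_prop))
      (Hi hg1 _ (by fun_prop))]
  have F4 : (∫ x in (-1:ℝ)..0, x * (1 - x ^ 2) * g x) + (∫ x in (0:ℝ)..1, x * (1 - x ^ 2) * g x)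
      = ∫ x in (-1:ℝ)..1, x * (1 - x ^ 2) * g x :=
    intervalIntegral.integral_add_adjacent_intervals (Hi hg2 _ (by fun_prop))
      (Hi hg1 _ (by fun_prop))
  have F5 : (∫ x in (-1:ℝ)..0, (1 / 8) * (11 * x ^ 2 - 3) * x * (1 - x ^ 2) * g x)
      + (∫ x in (0:ℝ)..1, (1 / 8) * (11 * x ^ 2 - 3) * x * (1 - x ^ 2) * g x)
      = ∫ x in (-1:ℝ)..1, (1 / 8) * (11 * x ^ 2 - 3) * x * (1 - x ^ 2) * g x :=
    intervalIntegral.integral_add_adjacent_intervals (Hi hg2 _ (by fun_prop))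
      (Hi hg1 _ (by fun_prop))
  -- nonnegativity facts
  have N1 : 0 ≤ ∫ x in (0:ℝ)..1, x * g x :=
    intervalIntegral.integral_nonneg (by norm_num)
      (fun u hu => mul_nonneg hu.1 (mem1 u hu))
  have N2 : 0 ≤ ∫ x in (0:ℝ)..1, x * (1 - x ^ 2) * g x :=
    intervalIntegral.integral_nonneg (by norm_num)
      (fun u hu => mul_nonneg (mul_nonneg hu.1 (by nlinarith only [hu.1, hu.2])) (mem1 u hu))
  have N3 : 0 ≤ ∫ x in (0:ℝ)..1, x * (1 - x ^ 2) ^ 2 * g x :=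
    intervalIntegral.integral_nonneg (by norm_num)
      (fun u hu => mul_nonneg (mul_nonneg hu.1 (sq_nonneg _)) (mem1 u hu))
  have N4 : 0 ≤ ∫ x in (0:ℝ)..1, (1-x) * (1 - x ^ 2) * g x :=
    intervalIntegral.integral_nonneg (by norm_num)
      (fun u hu => mul_nonneg (mul_nonneg (by linarith only [hu.2]) (by nlinarith only [hu.1, hu.2]))
        (mem1 u hu))
  have N5 : 0 ≤ ∫ x in (-1:ℝ)..0, (1+x) * (1 - x ^ 2) * g x :=
    intervalIntegral.integral_nonneg (by norm_num)
      (fun u hu => mul_nonneg (mul_nonneg (by linarith only [hu.1]) (by nlinarith only [hu.1, hu.2]))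
        (mem2 u hu))
  have N6 : 0 ≤ ∫ x in (0:ℝ)..1, (1-x) * g x :=
    intervalIntegral.integral_nonneg (by norm_num)
      (fun u hu => mul_nonneg (by linarith only [hu.2]) (mem1 u hu))
  have N7 : 0 ≤ ∫ x in (-1:ℝ)..0, (1+x) * g x :=
    intervalIntegral.integral_nonneg (by norm_num)
      (fun u hu => mul_nonneg (by linarith only [hu.1]) (mem2 u hu))
  -- J6 ≤ 0 and J8 ≤ 0
  have N8 : (∫ x in (-1:ℝ)..0, x * (1 - x ^ 2) * g x) ≤ 0 := by
    have h : 0 ≤ ∫ x in (-1:ℝ)..0, -(x * (1 - x ^ 2) * g x) :=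
      intervalIntegral.integral_nonneg (by norm_num) (fun u hu => by
        linarith only [mul_nonneg (mul_nonneg (neg_nonneg.2 hu.2)
          (show (0:ℝ) ≤ 1 - u ^ 2 by nlinarith only [hu.1, hu.2])) (mem2 u hu)])
    rw [intervalIntegral.integral_neg] at h; linarith only [h]
  have N9 : (∫ x in (-1:ℝ)..0, x * (1 - x ^ 2) ^ 2 * g x) ≤ 0 := by
    have h : 0 ≤ ∫ x in (-1:ℝ)..0, -(x * (1 - x ^ 2) ^ 2 * g x) :=
      intervalIntegral.integral_nonneg (by norm_num) (fun u hu => by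
        linarith only [mul_nonneg (mul_nonneg (neg_nonneg.2 hu.2) (sq_nonneg (1 - u ^ 2)))
          (mem2 u hu)])
    rw [intervalIntegral.integral_neg] at h; linarith only [h]
  -- linear decompositions
  have L1 : (∫ x in (0:ℝ)..1, (1+x) * g x)
      = 1 * (∫ x in (0:ℝ)..1, (1:ℝ) * g x) + 1 * (∫ x in (0:ℝ)..1, x * g x)
        + 0 * (∫ x in (0:ℝ)..1, x * g x) :=
    lin3 g _ (fun _ => 1) (fun x => x) (fun x => x) 1 1 0 hg1 (by fun_prop) (by fun_prop)
      (by fun_prop) (fun x => by ring)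
  have L2 : (∫ x in (-1:ℝ)..0, (1+x) * g x)
      = 1 * (∫ x in (-1:ℝ)..0, (1:ℝ) * g x) + 1 * (∫ x in (-1:ℝ)..0, x * g x)
        + 0 * (∫ x in (-1:ℝ)..0, x * g x) :=
    lin3 g _ (fun _ => 1) (fun x => x) (fun x => x) 1 1 0 hg2 (by fun_prop) (by fun_prop)
      (by fun_prop) (fun x => by ring)
  have L3 : (∫ x in (0:ℝ)..1, (1-x) * g x)
      = 1 * (∫ x in (0:ℝ)..1, (1:ℝ) * g x) + (-1) * (∫ x in (0:ℝ)..1, x * g x)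
        + 0 * (∫ x in (0:ℝ)..1, x * g x) :=
    lin3 g _ (fun _ => 1) (fun x => x) (fun x => x) 1 (-1) 0 hg1 (by fun_prop) (by fun_prop)
      (by fun_prop) (fun x => by ring)
  have L4 : (∫ x in (-1:ℝ)..0, (1-x) * g x)
      = 1 * (∫ x in (-1:ℝ)..0, (1:ℝ) * g x) + (-1) * (∫ x in (-1:ℝ)..0, x * g x)
        + 0 * (∫ x in (-1:ℝ)..0, x * g x) :=
    lin3 g _ (fun _ => 1) (fun x => x) (fun x => x) 1 (-1) 0 hg2 (by fun_prop) (by fun_prop)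
      (by fun_prop) (fun x => by ring)
  -- ap = V_+ + B_+,  am = V_- - J6
  have L5 : (∫ x in (0:ℝ)..1, (1 - x ^ 2) * g x)
      = 1 * (∫ x in (0:ℝ)..1, (1-x) * (1 - x ^ 2) * g x)
        + 1 * (∫ x in (0:ℝ)..1, x * (1 - x ^ 2) * g x)
        + 0 * (∫ x in (0:ℝ)..1, x * (1 - x ^ 2) * g x) :=
    lin3 g _ (fun x => (1-x) * (1 - x ^ 2)) (fun x => x * (1 - x ^ 2)) (fun x => x * (1 - x ^ 2))
      1 1 0 hg1 (by fun_prop) (by fun_prop) (by fun_prop) (fun x => by ring)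
  have L6 : (∫ x in (-1:ℝ)..0, (1 - x ^ 2) * g x)
      = 1 * (∫ x in (-1:ℝ)..0, (1+x) * (1 - x ^ 2) * g x)
        + (-1) * (∫ x in (-1:ℝ)..0, x * (1 - x ^ 2) * g x)
        + 0 * (∫ x in (-1:ℝ)..0, x * (1 - x ^ 2) * g x) :=
    lin3 g _ (fun x => (1+x) * (1 - x ^ 2)) (fun x => x * (1 - x ^ 2)) (fun x => x * (1 - x ^ 2))
      1 (-1) 0 hg2 (by fun_prop) (by fun_prop) (by fun_prop) (fun x => by ring)
  -- A4 halves decomposition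
  have L7 : (∫ x in (0:ℝ)..1, (1 / 8) * (11 * x ^ 2 - 3) * x * (1 - x ^ 2) * g x)
      = 1 * (∫ x in (0:ℝ)..1, x * (1 - x ^ 2) * g x)
        + (-(11/8)) * (∫ x in (0:ℝ)..1, x * (1 - x ^ 2) ^ 2 * g x)
        + 0 * (∫ x in (0:ℝ)..1, x * g x) :=
    lin3 g _ (fun x => x * (1 - x ^ 2)) (fun x => x * (1 - x ^ 2) ^ 2) (fun x => x)
      1 (-(11/8)) 0 hg1 (by fun_prop) (by fun_prop) (by fun_prop) (fun x => by ring)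
  have L8 : (∫ x in (-1:ℝ)..0, (1 / 8) * (11 * x ^ 2 - 3) * x * (1 - x ^ 2) * g x)
      = 1 * (∫ x in (-1:ℝ)..0, x * (1 - x ^ 2) * g x)
        + (-(11/8)) * (∫ x in (-1:ℝ)..0, x * (1 - x ^ 2) ^ 2 * g x)
        + 0 * (∫ x in (-1:ℝ)..0, x * g x) :=
    lin3 g _ (fun x => x * (1 - x ^ 2)) (fun x => x * (1 - x ^ 2) ^ 2) (fun x => x)
      1 (-(11/8)) 0 hg2 (by fun_prop) (by fun_prop) (by fun_prop) (fun x => by ring)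
  -- Cauchy-Schwarz inequalities via discriminants
  have D1 : ap ^ 2 ≤ (∫ x in (0:ℝ)..1, (1+x) * g x) * (∫ x in (0:ℝ)..1, (1-x) * (1 - x ^ 2) * g x) := by
    have key : ∀ l : ℝ, 0 ≤ (∫ x in (0:ℝ)..1, (1+x) * g x) * (l * l) + (-(2*ap)) * l
        + (∫ x in (0:ℝ)..1, (1-x) * (1 - x ^ 2) * g x) := by
      intro l
      have e := lin3 g (fun x => (1+x)*(l-(1-x))^2) (fun x => (1+x)) (fun x => (1 - x ^ 2))
        (fun x => (1-x) * (1 - x ^ 2)) (l*l) (-(2*l)) 1 hg1 (by fun_prop) (by fun_prop)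
        (by fun_prop) (fun x => by ring)
      have pos : 0 ≤ ∫ x in (0:ℝ)..1, (1+x)*(l-(1-x))^2 * g x :=
        intervalIntegral.integral_nonneg (by norm_num)
          (fun u hu => mul_nonneg (mul_nonneg (by linarith only [hu.1]) (sq_nonneg _)) (mem1 u hu))
      rw [hap]; linarith only [e, pos]
    have h := cs_aux key
    linarith only [h]
  have D2 : am ^ 2 ≤ (∫ x in (-1:ℝ)..0, (1-x) * g x) * (∫ x in (-1:ℝ)..0, (1+x) * (1 - x ^ 2) * g x) := by
    have key : ∀ l : ℝ, 0 ≤ (∫ x in (-1:ℝ)..0, (1-x) * g x) * (l * l) + (-(2*am)) * l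
        + (∫ x in (-1:ℝ)..0, (1+x) * (1 - x ^ 2) * g x) := by
      intro l
      have e := lin3 g (fun x => (1-x)*(l-(1+x))^2) (fun x => (1-x)) (fun x => (1 - x ^ 2))
        (fun x => (1+x) * (1 - x ^ 2)) (l*l) (-(2*l)) 1 hg2 (by fun_prop) (by fun_prop)
        (by fun_prop) (fun x => by ring)
      have pos : 0 ≤ ∫ x in (-1:ℝ)..0, (1-x)*(l-(1+x))^2 * g x :=
        intervalIntegral.integral_nonneg (by norm_num)
          (fun u hu => mul_nonneg (mul_nonneg (by linarith only [hu.2]) (sq_nonneg _)) (mem2 u hu))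
      rw [ham]; linarith only [e, pos]
    have h := cs_aux key
    linarith only [h]
  have D3 : (∫ x in (0:ℝ)..1, x * (1 - x ^ 2) * g x) ^ 2
      ≤ (∫ x in (0:ℝ)..1, x * g x) * (∫ x in (0:ℝ)..1, x * (1 - x ^ 2) ^ 2 * g x) := by
    have key : ∀ l : ℝ, 0 ≤ (∫ x in (0:ℝ)..1, x * g x) * (l * l)
        + (-(2 * (∫ x in (0:ℝ)..1, x * (1 - x ^ 2) * g x))) * l
        + (∫ x in (0:ℝ)..1, x * (1 - x ^ 2) ^ 2 * g x) := by
      intro l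
      have e := lin3 g (fun x => x*(l-(1-x^2))^2) (fun x => x) (fun x => x * (1 - x ^ 2))
        (fun x => x * (1 - x ^ 2) ^ 2) (l*l) (-(2*l)) 1 hg1 (by fun_prop) (by fun_prop)
        (by fun_prop) (fun x => by ring)
      have pos : 0 ≤ ∫ x in (0:ℝ)..1, x*(l-(1-x^2))^2 * g x :=
        intervalIntegral.integral_nonneg (by norm_num)
          (fun u hu => mul_nonneg (mul_nonneg hu.1 (sq_nonneg _)) (mem1 u hu))
      linarith only [e, pos]
    have h := cs_aux key
    linarith only [h]
  have D4 : (∫ x in (-1:ℝ)..0, x * (1 - x ^ 2) * g x) ^ 2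
      ≤ (∫ x in (-1:ℝ)..0, x * g x) * (∫ x in (-1:ℝ)..0, x * (1 - x ^ 2) ^ 2 * g x) := by
    have key : ∀ l : ℝ, 0 ≤ (-(∫ x in (-1:ℝ)..0, x * g x)) * (l * l)
        + (2 * (∫ x in (-1:ℝ)..0, x * (1 - x ^ 2) * g x)) * l
        + (-(∫ x in (-1:ℝ)..0, x * (1 - x ^ 2) ^ 2 * g x)) := by
      intro l
      have e := lin3 g (fun x => (-x)*(l-(1-x^2))^2) (fun x => x) (fun x => x * (1 - x ^ 2))
        (fun x => x * (1 - x ^ 2) ^ 2) (-(l*l)) (2*l) (-1) hg2 (by fun_prop) (by fun_prop)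
        (by fun_prop) (fun x => by ring)
      have pos : 0 ≤ ∫ x in (-1:ℝ)..0, (-x)*(l-(1-x^2))^2 * g x :=
        intervalIntegral.integral_nonneg (by norm_num)
          (fun u hu => mul_nonneg (mul_nonneg (neg_nonneg.2 hu.2) (sq_nonneg _)) (mem2 u hu))
      linarith only [e, pos]
    have h := cs_aux key
    linarith only [h]
  -- A4 tail estimates (integral mono)
  have T1 : ((11:ℝ)/2) * r * (∫ x in (0:ℝ)..1, x * (1 - x ^ 2) ^ 2 * g x)
      - 4 * r * (∫ x in (0:ℝ)..1, x * (1 - x ^ 2) * g x)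
      ≤ ∫ x in (0:ℝ)..1, (1 - x ^ 2) * g x := by
    have mono : (∫ x in (0:ℝ)..1, (((11/8) * (x*(1-x^2)^2) - x*(1-x^2)) * (4*r)) * g x)
        ≤ ∫ x in (0:ℝ)..1, (1 - x ^ 2) * g x := by
      apply intervalIntegral.integral_mono_on (by norm_num) (Hi hg1 _ (by fun_prop))
        (Hi hg1 _ (by fun_prop))
      intro u hu
      have h := ptwise hr2 hr3 hu.1 hu.2
      have h2 := (le_div_iff₀ hrpos).1 h
      exact mul_le_mul_of_nonneg_right h2 (mem1 u hu)
    have e := lin3 g (fun x => ((11/8) * (x*(1-x^2)^2) - x*(1-x^2)) * (4*r))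
      (fun x => x * (1 - x ^ 2) ^ 2) (fun x => x * (1 - x ^ 2)) (fun x => x)
      ((11/2)*r) (-(4*r)) 0 hg1 (by fun_prop) (by fun_prop) (by fun_prop) (fun x => by ring)
    linarith only [mono, e]
  have T2 : ((11:ℝ)/2) * r * (∫ x in (-1:ℝ)..0, x * (1 - x ^ 2) ^ 2 * g x)
      - 4 * r * (∫ x in (-1:ℝ)..0, x * (1 - x ^ 2) * g x)
      ≥ -(∫ x in (-1:ℝ)..0, (1 - x ^ 2) * g x) := by
    have mono : (∫ x in (-1:ℝ)..0, ((x*(1-x^2) - (11/8) * (x*(1-x^2)^2)) * (4*r)) * g x)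
        ≤ ∫ x in (-1:ℝ)..0, (1 - x ^ 2) * g x := by
      apply intervalIntegral.integral_mono_on (by norm_num) (Hi hg2 _ (by fun_prop))
        (Hi hg2 _ (by fun_prop))
      intro u hu
      have h := ptwise hr2 hr3 (neg_nonneg.2 hu.2) (by linarith only [hu.1] : -u ≤ 1)
      have h2 := (le_div_iff₀ hrpos).1 h
      have h3 : (u*(1-u^2) - (11/8) * (u*(1-u^2)^2)) * (4*r) ≤ 1 - u ^ 2 := by linarith only [h2]
      exact mul_le_mul_of_nonneg_right h3 (mem2 u hu)
    have e := lin3 g (fun x => (x*(1-x^2) - (11/8) * (x*(1-x^2)^2)) * (4*r))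
      (fun x => x * (1 - x ^ 2) ^ 2) (fun x => x * (1 - x ^ 2)) (fun x => x)
      (-((11/2)*r)) (4*r) 0 hg2 (by fun_prop) (by fun_prop) (by fun_prop) (fun x => by ring)
    linarith only [mono, e]
  -- abbreviations as pure real facts
  set J1 := ∫ x in (0:ℝ)..1, g x with hJ1
  set J2 := ∫ x in (-1:ℝ)..0, g x with hJ2
  set J3 := ∫ x in (0:ℝ)..1, x * g x with hJ3
  set J4 := ∫ x in (-1:ℝ)..0, x * g x with hJ4
  set J5 := ∫ x in (0:ℝ)..1, x * (1 - x ^ 2) * g x with hJ5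
  set J6 := ∫ x in (-1:ℝ)..0, x * (1 - x ^ 2) * g x with hJ6
  set J7 := ∫ x in (0:ℝ)..1, x * (1 - x ^ 2) ^ 2 * g x with hJ7
  set J8 := ∫ x in (-1:ℝ)..0, x * (1 - x ^ 2) ^ 2 * g x with hJ8
  clear_value J1 J2 J3 J4 J5 J6 J7 J8
  -- mass/center consequences
  have hJ40 : J4 = -J3 := by linarith only [F2]
  have hT12 : 2 * J3 ≤ 1 := by
    -- J3 ≤ J1 from N6/L3/one1 ; J3 = -J4 ≤ J2 from N7/L2/one2
    have h1 : J3 ≤ J1 := by linarith only [N6, L3, one1]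
    have h2 : -J4 ≤ J2 := by linarith only [N7, L2, one2]
    linarith only [F1, hJ40, h1, h2]
  -- B bounds
  have hBp : J5 ≤ ap - ap ^ 2 := by
    have hU : (∫ x in (0:ℝ)..1, (1+x) * g x) ≤ 1 := by linarith only [L1, L2, one1, one2, F1, N7, hJ40]
    have hV : ap ^ 2 ≤ ∫ x in (0:ℝ)..1, (1-x) * (1 - x ^ 2) * g x := vaux D1 N4 hU
    linarith only [L5, hap, hV]
  have hBm : -J6 ≤ am - am ^ 2 := by
    have hU : (∫ x in (-1:ℝ)..0, (1-x) * g x) ≤ 1 := by linarith only [L4, L3, one1, one2, F1, N6, hJ40]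
    have hV : am ^ 2 ≤ ∫ x in (-1:ℝ)..0, (1+x) * (1 - x ^ 2) * g x := vaux D2 N5 hU
    linarith only [L6, ham, hV]
  -- basic numeric facts
  have hap0 : 0 ≤ ap := by linarith only [L5, N4, N2, hap]
  have ham0 : 0 ≤ am := by linarith only [L6, N5, N8, ham]
  have hap221 : ap ≤ 0.221 := by linarith only [F3, ham0, hsmall]
  have ham221 : am ≤ 0.221 := by linarith only [F3, hap0, hsmall]
  have hbp18 : ap - ap ^ 2 ≤ 0.18 := by nlinarith only [sq_nonneg (ap - 0.221), hap221, hap0]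
  have hbm18 : am - am ^ 2 ≤ 0.18 := by nlinarith only [sq_nonneg (am - 0.221), ham221, ham0]
  have hbmbp : am - am ^ 2 ≤ ap - ap ^ 2 := by
    linarith only [mul_nonneg (sub_nonneg.2 hord)
      (show (0:ℝ) ≤ 1 - (ap + am) by linarith only [F3, hsmall])]
  constructor
  · -- A2 bound
    rw [← F4, abs_le]
    constructor
    · linarith only [hBm, N2, hbmbp]
    · linarith only [hBp, N8]
  · -- A4 bound
    rw [← F5, abs_le]
    have hS1 : (11:ℝ)/4 * J5 ^ 2 ≤ 11/8 * J7 := by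
      linarith only [D3, mul_nonneg (show (0:ℝ) ≤ 1 - 2*J3 by linarith only [hT12]) N3]
    have hS2 : (11:ℝ)/4 * J6 ^ 2 ≤ 11/8 * (-J8) := by
      have e4 : J4 * J8 = J3 * (-J8) := by rw [hJ40]; ring
      linarith only [D4, e4, mul_nonneg (show (0:ℝ) ≤ 1 - 2*J3 by linarith only [hT12])
        (show (0:ℝ) ≤ -J8 by linarith only [N9])]
    -- division facts
    have hdivm : J6 - (11/8) * J8 ≤ am / (4 * r) := by
      rw [le_div_iff₀ hrpos, ham]
      linarith only [T2]
    have hdivp : (11/8) * J7 - J5 ≤ ap / (4 * r) := by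
      rw [le_div_iff₀ hrpos, hap]
      linarith only [T1]
    -- monotone phi steps
    have mono1 : J5 - (11/4) * J5 ^ 2 ≤ (ap - ap ^ 2) - (11/4) * (ap - ap ^ 2) ^ 2 := by
      linarith only [mul_nonneg (sub_nonneg.2 hBp)
        (show (0:ℝ) ≤ 1 - (11/4) * ((ap - ap ^ 2) + J5) by linarith only [hBp, hbp18, N2])]
    have mono2 : (-J6) - (11/4) * J6 ^ 2 ≤ (am - am ^ 2) - (11/4) * (am - am ^ 2) ^ 2 := by
      linarith only [mul_nonneg (sub_nonneg.2 hBm)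
        (show (0:ℝ) ≤ 1 - (11/4) * ((am - am ^ 2) + (-J6)) by linarith only [hBm, hbm18, N8])]
    -- gap between phis dominates (ap-am)/(4r)
    have hgap : ap / (4*r) - am / (4*r)
        ≤ ((ap - ap ^ 2) - (11/4) * (ap - ap ^ 2) ^ 2)
          - ((am - am ^ 2) - (11/4) * (am - am ^ 2) ^ 2) := by
      have e1 : ap / (4*r) - am / (4*r) = (ap - am) / (4*r) := by ring
      have e2 : (ap - am) / (4*r) ≤ (ap - am) / 12 := by
        gcongr
        · linarith only [hr3]
      have h1 : (0.779:ℝ) ≤ 1 - (ap + am) := by linarith only [F3, hsmall]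
      have h2 : (0.39:ℝ) ≤ 1 - (11/4) * ((ap - ap ^ 2) + (am - am ^ 2)) := by
        linarith only [sq_nonneg ap, sq_nonneg am, F3, hsmall]
      have hP := mul_le_mul h1 h2 (by norm_num) (by linarith only [F3, hsmall])
      have hd : (0:ℝ) ≤ ap - am := by linarith only [hord]
      have e3 : ((ap - ap ^ 2) - (11/4) * (ap - ap ^ 2) ^ 2)
          - ((am - am ^ 2) - (11/4) * (am - am ^ 2) ^ 2)
          = (ap - am) * ((1 - (ap + am)) * (1 - (11/4) * ((ap - ap ^ 2) + (am - am ^ 2)))) := by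
        ring
      linarith only [mul_le_mul_of_nonneg_left hP hd, e1, e2, e3, hd]
    constructor
    · -- lower bound
      linarith only [L7, L8, hdivp, hS2, mono2, hgap]
    · -- upper bound
      linarith only [L7, L8, hdivm, hS1, mono1]
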